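/- For any two distinct primes p and q, the image of ℚ under the diagonal embedding x ↦ (x, x) into ℚₚ × ℚ_q is dense (weak approximation for two places). -/
import Mathlib

lemma exists_int_close (p q : ℕ) [Fact p.Prime] [Fact q.Prime] (hpq : p ≠ q)
    {ε : ℝ} (hε : 0 < ε) :
    ∃ m : ℤ, ‖(m : ℚ_[p])‖ < ε ∧ ‖((m : ℚ_[q]) - 1)‖ < ε := by
  have hp1 : (1:ℝ) < p := by exact_mod_cast (Fact.out : p.Prime).one_lt
  have hq1 : (1:ℝ) < q := by exact_mod_cast (Fact.out : q.Prime).one_lt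
  obtain ⟨a, ha⟩ := exists_pow_lt_of_lt_one hε (inv_lt_one_of_one_lt₀ hp1)
  obtain ⟨b, hb⟩ := exists_pow_lt_of_lt_one hε (inv_lt_one_of_one_lt₀ hq1)
  have hco : Nat.Coprime (p ^ a) (q ^ b) :=
    Nat.Coprime.pow _ _ ((Nat.coprime_primes Fact.out Fact.out).mpr hpq)
  obtain ⟨k, hk0, hk1⟩ := Nat.chineseRemainder hco 0 1
  refine ⟨(k : ℤ), ?_, ?_⟩
  · have hdvd : ((p:ℤ) ^ a) ∣ (k : ℤ) := by
      have := (Nat.modEq_zero_iff_dvd).mp hk0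
      exact_mod_cast this
    have hle := (Padic.norm_int_le_pow_iff_dvd (p := p) (k : ℤ) a).mpr hdvd
    calc ‖((k:ℤ) : ℚ_[p])‖ ≤ (p:ℝ) ^ (-a : ℤ) := hle
      _ = ((p:ℝ)⁻¹) ^ a := by rw [zpow_neg, zpow_natCast, ← inv_pow]
      _ < ε := ha
  · have hdvd : ((q:ℤ) ^ b) ∣ ((k : ℤ) - 1) := by
      have h1 := hk1.dvd
      have : ((q:ℤ) ^ b) ∣ (1 - (k:ℤ)) := by exact_mod_cast h1
      simpa using this.neg_right
    have hle := (Padic.norm_int_le_pow_iff_dvd (p := q) ((k:ℤ) - 1) b).mpr hdvd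
    have hcast : (((k:ℤ) - 1 : ℤ) : ℚ_[q]) = ((k:ℤ) : ℚ_[q]) - 1 := by push_cast; ring
    calc ‖(((k:ℤ)) : ℚ_[q]) - 1‖ = ‖(((k:ℤ) - 1 : ℤ) : ℚ_[q])‖ := by rw [hcast]
      _ ≤ (q:ℝ) ^ (-b : ℤ) := hle
      _ = ((q:ℝ)⁻¹) ^ b := by rw [zpow_neg, zpow_natCast, ← inv_pow]
      _ < ε := hb

/-- Weak approximation for two places: `ℚ` embeds diagonally with dense image
into `ℚₚ × ℚ_q` for distinct primes `p ≠ q`. -/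
theorem denseRange_rat_diagonal_padic (p q : ℕ) [Fact p.Prime] [Fact q.Prime]
    (hpq : p ≠ q) :
    DenseRange (fun r : ℚ => ((r : ℚ_[p]), (r : ℚ_[q]))) := by
  rw [Metric.denseRange_iff]
  rintro ⟨x, y⟩ ε hε
  obtain ⟨A, hA⟩ := Padic.rat_dense (p := p) x (half_pos hε)
  obtain ⟨B, hB⟩ := Padic.rat_dense (p := q) y (half_pos hε)
  set C : ℝ := max ‖((B - A : ℚ) : ℚ_[p])‖ (max ‖((B - A : ℚ) : ℚ_[q])‖ 1) with hC
  have hCpos : 0 < C := lt_of_lt_of_le one_pos (le_trans (le_max_right _ _) (le_max_right _ _))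
  obtain ⟨m, hm0, hm1⟩ := exists_int_close p q hpq (div_pos (half_pos hε) hCpos)
  refine ⟨A + (B - A) * m, ?_⟩
  rw [Prod.dist_eq]
  have h1 : dist x ((A + (B - A) * m : ℚ) : ℚ_[p]) < ε := by
    rw [dist_eq_norm]
    have : x - ((A + (B - A) * m : ℚ) : ℚ_[p])
        = (x - A) - ((B - A : ℚ) : ℚ_[p]) * ((m : ℤ) : ℚ_[p]) := by push_cast; ring
    rw [this]
    calc ‖(x - A) - ((B - A : ℚ) : ℚ_[p]) * ((m : ℤ) : ℚ_[p])‖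
        ≤ ‖x - A‖ + ‖((B - A : ℚ) : ℚ_[p]) * ((m : ℤ) : ℚ_[p])‖ := norm_sub_le _ _
      _ = ‖x - A‖ + ‖((B - A : ℚ) : ℚ_[p])‖ * ‖((m : ℤ) : ℚ_[p])‖ := by rw [norm_mul]
      _ < ε / 2 + C * (ε / 2 / C) := by
          refine add_lt_add_of_lt_of_le hA ?_
          refine mul_le_mul (le_max_left _ _) hm0.le (norm_nonneg _) hCpos.le
      _ = ε := by field_simp; ring
  have h2 : dist y ((A + (B - A) * m : ℚ) : ℚ_[q]) < ε := by
    rw [dist_eq_norm]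
    have : y - ((A + (B - A) * m : ℚ) : ℚ_[q])
        = (y - B) - ((B - A : ℚ) : ℚ_[q]) * (((m : ℤ) : ℚ_[q]) - 1) := by push_cast; ring
    rw [this]
    calc ‖(y - B) - ((B - A : ℚ) : ℚ_[q]) * (((m : ℤ) : ℚ_[q]) - 1)‖
        ≤ ‖y - B‖ + ‖((B - A : ℚ) : ℚ_[q])‖ * ‖(((m : ℤ) : ℚ_[q]) - 1)‖ := by
          rw [← norm_mul]; exact norm_sub_le _ _
      _ < ε / 2 + C * (ε / 2 / C) := by
          refine add_lt_add_of_lt_of_le hB ?_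
          refine mul_le_mul (le_trans (le_max_left _ _) (le_max_right _ _)) hm1.le
            (norm_nonneg _) hCpos.le
      _ = ε := by field_simp; ring
  exact max_lt h1 h2
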